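/- Let p : Fin n → ℕ with ∑ i, p i = m. There is a group homomorphism ι_p : (∏_{i : Fin n} B_{p i}) → B_m sending the k-th Artin generator of the i-th factor to the (∑_{j<i} p j + k)-th Artin generator of B_m. Moreover, for every β in the product, the underlying permutation q(ι_p(β)) lies in Stab(g_p) (it preserves each block of Fin m setwise); in particular ι_p maps ∏_{i} PB_{p i} into the pure braid group PB_m. -/

import Mathlib

/-- The cardinality of the fiber of `f` at `i`, i.e. `p_i(f) = |f⁻¹({i})|`. -/
def fiberCard {m n : ℕ} (f : Fin m → Fin n) (i : Fin n) : ℕ :=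
  (Finset.univ.filter fun x => f x = i).card

/-- The Artin relations of the braid group `B_n` on `n` strands, with generators
`σ_1, …, σ_{n-1}` indexed by `Fin (n-1)`. -/
def braidRels (n : ℕ) : Set (FreeGroup (Fin (n - 1))) :=
  {r | (∃ i j : Fin (n - 1), (j : ℕ) = (i : ℕ) + 1 ∧
          r = .of i * .of j * .of i * (.of j * .of i * .of j)⁻¹) ∨
       (∃ i j : Fin (n - 1), ((i : ℕ) + 2 ≤ (j : ℕ) ∨ (j : ℕ) + 2 ≤ (i : ℕ)) ∧
          r = .of i * .of j * (.of j * .of i)⁻¹)}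

/-- The braid group on `n` strands. -/
abbrev BraidGroup (n : ℕ) : Type := PresentedGroup (braidRels n)

/-- The `i`-th Artin generator `σ_{i+1}` of the braid group on `n` strands. -/
def braidGen (n : ℕ) (i : Fin (n - 1)) : BraidGroup n := PresentedGroup.of i

/-- The transposition of `Fin n` exchanging the `i`-th and `(i+1)`-st elements. -/
def braidSwap (n : ℕ) (i : Fin (n - 1)) : Equiv.Perm (Fin n) :=
  Equiv.swap ⟨(i : ℕ), by have := i.isLt; omega⟩ ⟨(i : ℕ) + 1, by have := i.isLt; omega⟩

lemma aux_viaEmbedding_swap {α β : Type*} [DecidableEq α] [DecidableEq β]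
    (e : α ↪ β) (a b : α) :
    (Equiv.swap a b).viaEmbedding e = Equiv.swap (e a) (e b) := by
  ext x
  by_cases hx : x ∈ Set.range e
  · obtain ⟨c, rfl⟩ := hx
    rw [Equiv.Perm.viaEmbedding_apply]
    rcases eq_or_ne c a with rfl | ha
    · simp
    rcases eq_or_ne c b with rfl | hb
    · simp
    · rw [Equiv.swap_apply_of_ne_of_ne ha hb,
        Equiv.swap_apply_of_ne_of_ne (fun h => ha (e.injective h))
          (fun h => hb (e.injective h))]
  · rw [Equiv.Perm.viaEmbedding_apply_of_notMem _ _ _ hx,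
      Equiv.swap_apply_of_ne_of_ne (fun h => hx ⟨a, h.symm⟩) (fun h => hx ⟨b, h.symm⟩)]

lemma aux_initseg {m : ℕ} (S : Finset (Fin m))
    (hS : ∀ ⦃x⦄, x ∈ S → ∀ ⦃y⦄, y ≤ x → y ∈ S) (x : Fin m) :
    x ∈ S ↔ (x : ℕ) < S.card := by
  constructor
  · intro hx
    have h1 : Finset.Iic x ⊆ S := fun y hy => hS hx (Finset.mem_Iic.mp hy)
    have h2 := Finset.card_le_card h1
    rw [Fin.card_Iic] at h2
    omega
  · intro hx
    by_contra hxS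
    have h2 : S ⊆ Finset.Iio x := by
      intro y hy
      rw [Finset.mem_Iio]
      by_contra hyx
      exact hxS (hS hy (not_lt.mp hyx))
    have h3 := Finset.card_le_card h2
    rw [Fin.card_Iio] at h3
    omega

/-- Let `p : Fin n → ℕ` with `∑ i, p i = m`, let `g = g_p` be the unique monotone function
`Fin m → Fin n` whose fiber at `i` has cardinality `p i`, let `q : B_m →* Equiv.Perm (Fin m)`
be the underlying-permutation homomorphism (characterized on the Artin generators), and
similarly `qfam i : B_{p i} →* Equiv.Perm (Fin (p i))` for each factor.  There is a group
homomorphism `ι_p : (∏_{i : Fin n} B_{p i}) →* B_m` sending the `k`-th Artin generator of the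
`i`-th factor to the `(∑_{j<i} p j + k)`-th Artin generator of `B_m`.  Moreover, for every `β`
in the product, the underlying permutation `q (ι_p β)` lies in `Stab(g_p)` (it preserves each
block of `Fin m` setwise); in particular `ι_p` maps `∏_i PB_{p i}` into the pure braid group
`PB_m`, the kernels being the pure braid groups. -/
theorem stmt_15 (n m : ℕ) (p : Fin n → ℕ) (hp : ∑ i, p i = m)
    (g : Fin m → Fin n) (hg : Monotone g) (hfib : ∀ i, fiberCard g i = p i)
    (q : BraidGroup m →* Equiv.Perm (Fin m)) (hq : ∀ k, q (braidGen m k) = braidSwap m k)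
    (qfam : ∀ i : Fin n, BraidGroup (p i) →* Equiv.Perm (Fin (p i)))
    (hqfam : ∀ (i : Fin n) (k : Fin (p i - 1)), qfam i (braidGen (p i) k) = braidSwap (p i) k) :
    ∃ ι : (∀ i : Fin n, BraidGroup (p i)) →* BraidGroup m,
      (∀ (i : Fin n) (k : Fin (p i - 1)) (k' : Fin (m - 1)),
          (k' : ℕ) = (∑ j ∈ Finset.univ.filter fun j => j < i, p j) + (k : ℕ) →
          ι (Pi.mulSingle i (braidGen (p i) k)) = braidGen m k') ∧
      (∀ β : ∀ i : Fin n, BraidGroup (p i), g ∘ ⇑(q (ι β)) = g) ∧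
      (∀ β : ∀ i : Fin n, BraidGroup (p i),
          (∀ i, β i ∈ (qfam i).ker) → ι β ∈ q.ker) := by
  classical
  obtain ⟨off, hoffdef⟩ : ∃ o : Fin n → ℕ,
      ∀ i, o i = ∑ j ∈ Finset.univ.filter fun j => j < i, p j := ⟨_, fun _ => rfl⟩
  -- filter (≤ i) as insert
  have hins : ∀ i : Fin n, (Finset.univ.filter fun j => j ≤ i)
      = insert i (Finset.univ.filter fun j => j < i) := by
    intro i
    ext j
    simp only [Finset.mem_filter, Finset.mem_univ, true_and, Finset.mem_insert]
    constructor
    · intro h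
      rcases lt_or_eq_of_le h with h' | h'
      · exact Or.inr h'
      · exact Or.inl h'
    · rintro (rfl | h)
      · exact le_refl _
      · exact le_of_lt h
  have hsumle : ∀ i : Fin n,
      (∑ j ∈ Finset.univ.filter fun j => j ≤ i, p j) = off i + p i := by
    intro i
    rw [hins i, Finset.sum_insert (by simp), hoffdef]
    exact add_comm _ _
  have hoffle : ∀ i : Fin n, off i + p i ≤ m := by
    intro i
    rw [← hsumle i, ← hp]
    exact Finset.sum_le_sum_of_subset (Finset.filter_subset _ _)
  have hofflt : ∀ i i' : Fin n, i < i' → off i + p i ≤ off i' := by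
    intro i i' h
    rw [← hsumle i, hoffdef]
    apply Finset.sum_le_sum_of_subset
    intro j hj
    simp only [Finset.mem_filter, Finset.mem_univ, true_and] at hj ⊢
    exact lt_of_le_of_lt hj h
  have hidx : ∀ (i : Fin n) (k : Fin (p i - 1)), off i + (k : ℕ) < m - 1 := by
    intro i k
    have h1 := k.isLt
    have h2 := hoffle i
    omega
  -- abstract generators
  obtain ⟨fgen, hfgen⟩ : ∃ f : ∀ i : Fin n, Fin (p i - 1) → BraidGroup m,
      ∀ i k, f i k = braidGen m ⟨off i + (k : ℕ), hidx i k⟩ := ⟨_, fun _ _ => rfl⟩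
  -- braid relations in BraidGroup m
  have hrel : ∀ r ∈ braidRels m, PresentedGroup.mk (braidRels m) r = 1 := by
    intro r hr
    exact (QuotientGroup.eq_one_iff r).mpr (Subgroup.subset_normalClosure hr)
  have hb1 : ∀ a b : Fin (m - 1), (b : ℕ) = (a : ℕ) + 1 →
      braidGen m a * braidGen m b * braidGen m a
        = braidGen m b * braidGen m a * braidGen m b := by
    intro a b h
    have h2 := hrel _ (Or.inl ⟨a, b, h, rfl⟩)
    simp only [map_mul, map_inv] at h2
    have h3 := mul_inv_eq_one.mp h2
    simpa [braidGen, PresentedGroup.of] using h3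
  have hb2 : ∀ a b : Fin (m - 1), ((a : ℕ) + 2 ≤ (b : ℕ) ∨ (b : ℕ) + 2 ≤ (a : ℕ)) →
      braidGen m a * braidGen m b = braidGen m b * braidGen m a := by
    intro a b h
    have h2 := hrel _ (Or.inr ⟨a, b, h, rfl⟩)
    simp only [map_mul, map_inv] at h2
    have h3 := mul_inv_eq_one.mp h2
    simpa [braidGen, PresentedGroup.of] using h3
  -- the images satisfy the relations
  have hliftrel : ∀ i : Fin n, ∀ r ∈ braidRels (p i), FreeGroup.lift (fgen i) r = 1 := by
    intro i r hr
    rcases hr with ⟨a, b, hab, rfl⟩ | ⟨a, b, hab, rfl⟩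
    · simp only [map_mul, map_inv, FreeGroup.lift_apply_of]
      rw [mul_inv_eq_one, hfgen, hfgen]
      exact hb1 _ _ (by show off i + (b : ℕ) = off i + (a : ℕ) + 1; omega)
    · simp only [map_mul, map_inv, FreeGroup.lift_apply_of]
      rw [mul_inv_eq_one, hfgen, hfgen]
      refine hb2 _ _ ?_
      rcases hab with h | h
      · exact Or.inl (by show off i + (a : ℕ) + 2 ≤ off i + (b : ℕ); omega)
      · exact Or.inr (by show off i + (b : ℕ) + 2 ≤ off i + (a : ℕ); omega)
  -- the block homomorphisms
  obtain ⟨φ, hφ⟩ : ∃ φ : ∀ i : Fin n, BraidGroup (p i) →* BraidGroup m,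
      ∀ i k, φ i (braidGen (p i) k) = fgen i k :=
    ⟨fun i => PresentedGroup.toGroup (hliftrel i),
      fun i k => PresentedGroup.toGroup.of (hliftrel i)⟩
  -- generators of distinct blocks commute
  have hgencomm : ∀ i j : Fin n, i ≠ j → ∀ (a : Fin (p i - 1)) (b : Fin (p j - 1)),
      Commute (fgen i a) (fgen j b) := by
    intro i j hij a b
    rw [hfgen, hfgen]
    have ha := a.isLt
    have hb := b.isLt
    rcases lt_or_gt_of_ne hij with h | h
    · have h2 := hofflt i j h
      exact hb2 _ _ (Or.inl (by show off i + (a : ℕ) + 2 ≤ off j + (b : ℕ); omega))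
    · have h2 := hofflt j i h
      exact hb2 _ _ (Or.inr (by show off j + (b : ℕ) + 2 ≤ off i + (a : ℕ); omega))
  -- all elements of distinct blocks commute
  have hcomm : Pairwise fun i j => ∀ x y, Commute (φ i x) (φ j y) := by
    intro i j hij x y
    have step1 : ∀ (b : Fin (p j - 1)) (x : BraidGroup (p i)),
        Commute (φ i x) (fgen j b) := by
      intro b x
      have hmem := PresentedGroup.generated_by (braidRels (p i))
        (Subgroup.comap (φ i) (Subgroup.centralizer {fgen j b}))
        (fun a => by
          rw [Subgroup.mem_comap, Subgroup.mem_centralizer_iff]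
          intro h hh
          rw [Set.mem_singleton_iff] at hh
          subst hh
          have h4 : φ i (PresentedGroup.of a) = fgen i a := hφ i a
          rw [h4]
          exact ((hgencomm i j hij a b).symm).eq) x
      rw [Subgroup.mem_comap, Subgroup.mem_centralizer_iff] at hmem
      exact (hmem _ rfl).symm
    have hmem2 := PresentedGroup.generated_by (braidRels (p j))
      (Subgroup.comap (φ j) (Subgroup.centralizer {φ i x}))
      (fun b => by
        rw [Subgroup.mem_comap, Subgroup.mem_centralizer_iff]
        intro h hh
        rw [Set.mem_singleton_iff] at hh
        subst hh
        have h4 : φ j (PresentedGroup.of b) = fgen j b := hφ j b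
        rw [h4]
        exact (step1 b x).eq) y
    rw [Subgroup.mem_comap, Subgroup.mem_centralizer_iff] at hmem2
    exact hmem2 _ rfl
  -- the embeddings of blocks
  have hembval : ∀ (i : Fin n) (c : Fin (p i)), off i + (c : ℕ) < m := by
    intro i c
    have h1 := c.isLt
    have h2 := hoffle i
    omega
  obtain ⟨emb, hemb⟩ : ∃ e : ∀ i : Fin n, Fin (p i) ↪ Fin m,
      ∀ i c, ((e i c : Fin m) : ℕ) = off i + (c : ℕ) := by
    refine ⟨fun i => ⟨fun c => ⟨off i + (c : ℕ), hembval i c⟩, ?_⟩, fun i c => rfl⟩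
    intro c c' h
    have h2 : off i + (c : ℕ) = off i + (c' : ℕ) := congrArg Fin.val h
    exact Fin.ext (by omega)
  -- fiber cardinalities
  have hcardgen : ∀ s : Finset (Fin n),
      (Finset.univ.filter fun x => g x ∈ s).card = ∑ j ∈ s, p j := by
    intro s
    have h1 : (Finset.univ.filter fun x => g x ∈ s)
        = s.biUnion fun j => Finset.univ.filter fun x => g x = j := by
      ext x
      simp only [Finset.mem_filter, Finset.mem_biUnion, Finset.mem_univ, true_and]
      exact ⟨fun h => ⟨g x, h, rfl⟩, by rintro ⟨j, hj, rfl⟩; exact hj⟩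
    rw [h1, Finset.card_biUnion]
    · exact Finset.sum_congr rfl fun j _ => hfib j
    · intro a _ b _ hab
      simp only [Function.onFun]
      rw [Finset.disjoint_left]
      intro x hx1 hx2
      simp only [Finset.mem_filter, Finset.mem_univ, true_and] at hx1 hx2
      exact hab (hx1.symm.trans hx2)
  have hlt : ∀ (i : Fin n) (x : Fin m), g x < i ↔ (x : ℕ) < off i := by
    intro i x
    have hdc : ∀ ⦃y⦄, y ∈ Finset.univ.filter (fun x => g x < i) →
        ∀ ⦃z⦄, z ≤ y → z ∈ Finset.univ.filter (fun x => g x < i) := by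
      intro y hy z hz
      simp only [Finset.mem_filter, Finset.mem_univ, true_and] at hy ⊢
      exact lt_of_le_of_lt (hg hz) hy
    have hc : (Finset.univ.filter fun x => g x < i).card = off i := by
      have h1 : (Finset.univ.filter fun x => g x < i)
          = Finset.univ.filter fun x => g x ∈ Finset.univ.filter (fun j => j < i) := by
        ext y; simp
      rw [h1, hcardgen, hoffdef]
    have h2 := aux_initseg _ hdc x
    rw [hc] at h2
    simp only [Finset.mem_filter, Finset.mem_univ, true_and] at h2
    exact h2
  have hle : ∀ (i : Fin n) (x : Fin m), g x ≤ i ↔ (x : ℕ) < off i + p i := by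
    intro i x
    have hdc : ∀ ⦃y⦄, y ∈ Finset.univ.filter (fun x => g x ≤ i) →
        ∀ ⦃z⦄, z ≤ y → z ∈ Finset.univ.filter (fun x => g x ≤ i) := by
      intro y hy z hz
      simp only [Finset.mem_filter, Finset.mem_univ, true_and] at hy ⊢
      exact le_trans (hg hz) hy
    have hc : (Finset.univ.filter fun x => g x ≤ i).card = off i + p i := by
      have h1 : (Finset.univ.filter fun x => g x ≤ i)
          = Finset.univ.filter fun x => g x ∈ Finset.univ.filter (fun j => j ≤ i) := by
        ext y; simp
      rw [h1, hcardgen, hsumle]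
    have h2 := aux_initseg _ hdc x
    rw [hc] at h2
    simp only [Finset.mem_filter, Finset.mem_univ, true_and] at h2
    exact h2
  have hgemb : ∀ (i : Fin n) (c : Fin (p i)), g (emb i c) = i := by
    intro i c
    have hcv := hemb i c
    have hclt := c.isLt
    have hx1 : ¬ g (emb i c) < i := by
      rw [hlt]
      omega
    have hx2 : g (emb i c) ≤ i := by
      rw [hle]
      omega
    exact le_antisymm hx2 (not_lt.mp hx1)
  have hstab : ∀ (i : Fin n) (σ : Equiv.Perm (Fin (p i))),
      g ∘ ⇑(Equiv.Perm.viaEmbeddingHom (emb i) σ) = g := by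
    intro i σ
    funext x
    simp only [Function.comp_apply, Equiv.Perm.viaEmbeddingHom_apply]
    by_cases hx : x ∈ Set.range (emb i)
    · obtain ⟨c, rfl⟩ := hx
      rw [Equiv.Perm.viaEmbedding_apply, hgemb, hgemb]
    · rw [Equiv.Perm.viaEmbedding_apply_of_notMem _ _ _ hx]
  -- q ∘ φ i = viaEmbeddingHom (emb i) ∘ qfam i
  have hE : ∀ i : Fin n,
      q.comp (φ i) = (Equiv.Perm.viaEmbeddingHom (emb i)).comp (qfam i) := by
    intro i
    refine PresentedGroup.ext fun a => ?_
    simp only [MonoidHom.comp_apply]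
    have h1 : φ i (PresentedGroup.of a) = fgen i a := hφ i a
    have h2 : qfam i (PresentedGroup.of a) = braidSwap (p i) a := hqfam i a
    rw [h1, h2, hfgen, hq, Equiv.Perm.viaEmbeddingHom_apply, braidSwap, braidSwap,
      aux_viaEmbedding_swap]
    have ha := a.isLt
    congr 1 <;> refine Fin.ext ?_ <;> simp only [hemb, Fin.val_mk] <;> omega
  have hterm : ∀ (i : Fin n) (x : BraidGroup (p i)), g ∘ ⇑(q (φ i x)) = g := by
    intro i x
    have h2 := DFunLike.congr_fun (hE i) x
    simp only [MonoidHom.comp_apply] at h2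
    rw [h2]
    exact hstab i (qfam i x)
  -- the stabilizer subgroup
  obtain ⟨Stab, hStabMem⟩ : ∃ S : Subgroup (Equiv.Perm (Fin m)),
      ∀ τ, τ ∈ S ↔ g ∘ ⇑τ = g := by
    refine ⟨{ carrier := {τ | g ∘ ⇑τ = g}
              one_mem' := by
                show g ∘ ⇑(1 : Equiv.Perm (Fin m)) = g
                simp
              mul_mem' := ?_
              inv_mem' := ?_ }, fun τ => Iff.rfl⟩
    · intro a b ha hb
      show g ∘ ⇑(a * b) = g
      funext x
      simp only [Function.comp_apply, Equiv.Perm.coe_mul]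
      exact (congrFun (ha : g ∘ ⇑a = g) (b x)).trans (congrFun (hb : g ∘ ⇑b = g) x)
    · intro a ha
      show g ∘ ⇑a⁻¹ = g
      funext x
      simp only [Function.comp_apply]
      have h := congrFun (ha : g ∘ ⇑a = g) (a⁻¹ x)
      simp only [Function.comp_apply, Equiv.Perm.inv_def, Equiv.apply_symm_apply] at h
      exact h.symm
  -- every element of the product is a product of mulSingles
  have hprod : ∀ (β : ∀ i : Fin n, BraidGroup (p i))
      (K : Subgroup (∀ i : Fin n, BraidGroup (p i))),
      (∀ i, Pi.mulSingle i (β i) ∈ K) → β ∈ K := by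
    intro β K h
    rw [← Finset.noncommProd_mulSingle β]
    exact Subgroup.noncommProd_mem K _ fun i _ => h i
  refine ⟨MonoidHom.noncommPiCoprod φ hcomm, ?_, ?_, ?_⟩
  · intro i k k' hk'
    rw [MonoidHom.noncommPiCoprod_mulSingle, hφ, hfgen]
    congr 1
    refine Fin.ext ?_
    show off i + (k : ℕ) = (k' : ℕ)
    rw [hoffdef] at *
    omega
  · intro β
    have h1 : β ∈ Subgroup.comap (q.comp (MonoidHom.noncommPiCoprod φ hcomm)) Stab := by
      refine hprod β _ fun i => ?_
      rw [Subgroup.mem_comap, MonoidHom.comp_apply, MonoidHom.noncommPiCoprod_mulSingle,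
        hStabMem]
      exact hterm i (β i)
    rw [Subgroup.mem_comap, MonoidHom.comp_apply, hStabMem] at h1
    exact h1
  · intro β hβ
    have h1 : β ∈ Subgroup.comap (MonoidHom.noncommPiCoprod φ hcomm) q.ker := by
      refine hprod β _ fun i => ?_
      rw [Subgroup.mem_comap, MonoidHom.noncommPiCoprod_mulSingle, MonoidHom.mem_ker]
      have h2 := DFunLike.congr_fun (hE i) (β i)
      simp only [MonoidHom.comp_apply] at h2
      rw [h2, MonoidHom.mem_ker.mp (hβ i), map_one]
    exact Subgroup.mem_comap.mp h1
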